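/- Let f and g be nonzero homogeneous polynomials in K[x,y] with deg f = m and deg g = n, and suppose every common divisor of f and g in K[x,y] is a unit. Then (x,y)^{m+n-1} ⊆ (f,g), i.e. every monomial x^i y^j with i + j = m + n - 1 lies in the ideal generated by f and g. -/

import Mathlib

open MvPolynomial

namespace SylvesterAux

variable {K : Type*} [Field K]


lemma fin2_degree (d : Fin 2 →₀ ℕ) : d.degree = d 0 + d 1 := by
  rw [Finsupp.degree_apply, Finset.sum_subset (Finset.subset_univ _)
    (fun i _ hi => Finsupp.notMem_support_iff.mp hi), Fin.sum_univ_two]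

lemma fin2_decomp (d : Fin 2 →₀ ℕ) :
    d = Finsupp.single 0 (d 0) + Finsupp.single 1 (d 1) := by
  ext i; fin_cases i <;> simp

noncomputable def μf (k : ℕ) (i : Fin (k+1)) : Fin 2 →₀ ℕ :=
  Finsupp.single 0 (i : ℕ) + Finsupp.single 1 (k - i)

@[simp] lemma μf_apply0 (k : ℕ) (i : Fin (k+1)) : μf k i 0 = i := by
  simp [μf, Finsupp.single_apply]

lemma μf_degree (k : ℕ) (i : Fin (k+1)) : (μf k i).degree = k := by
  rw [fin2_degree]
  simp [μf, Finsupp.single_apply]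
  omega

lemma μf_injective (k : ℕ) : Function.Injective (μf k) := by
  intro i j h
  have := congrArg (fun d : Fin 2 →₀ ℕ => d 0) h
  simp only [μf_apply0] at this
  exact Fin.ext this

noncomputable def Lmap (k : ℕ) : (homogeneousSubmodule (Fin 2) K k) →ₗ[K] (Fin (k+1) → K) where
  toFun p i := coeff (μf k i) (p : MvPolynomial (Fin 2) K)
  map_add' p q := by ext i; simp
  map_smul' c p := by ext i; simp

lemma Lmap_injective (k : ℕ) : Function.Injective (Lmap (K := K) k) := by
  rw [← LinearMap.ker_eq_bot, LinearMap.ker_eq_bot']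
  intro p hp
  have hph : (p : MvPolynomial (Fin 2) K).IsHomogeneous k := p.2
  apply Subtype.ext
  apply MvPolynomial.ext
  intro d
  rw [Submodule.coe_zero, coeff_zero]
  by_cases hd : d.degree = k
  · have h0 : d 0 ≤ k := by rw [fin2_degree] at hd; omega
    have hde : d = μf k ⟨d 0, by omega⟩ := by
      have h1 : d 1 = k - d 0 := by rw [fin2_degree] at hd; omega
      conv_lhs => rw [fin2_decomp d]
      unfold μf
      rw [h1]
    rw [hde]
    have := congrFun hp ⟨d 0, by omega⟩
    simpa [Lmap] using this
  · by_contra hc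
    exact hd (by rw [Finsupp.degree_eq_weight_one]; exact hph hc)

lemma Lmap_surjective (k : ℕ) : Function.Surjective (Lmap (K := K) k) := by
  intro v
  refine ⟨⟨∑ i : Fin (k+1), monomial (μf k i) (v i), ?_⟩, ?_⟩
  · exact Submodule.sum_mem _ fun i _ =>
      (mem_homogeneousSubmodule _ _).2 (isHomogeneous_monomial _ (μf_degree k i))
  · ext j
    simp only [Lmap, LinearMap.coe_mk, AddHom.coe_mk]
    rw [coeff_sum]
    rw [Finset.sum_eq_single j]
    · simp [coeff_monomial]
    · intro i _ hij
      rw [coeff_monomial, if_neg (fun h => hij (μf_injective k h))]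
    · intro h
      exact absurd (Finset.mem_univ j) h

noncomputable def Emap (k : ℕ) : (homogeneousSubmodule (Fin 2) K k) ≃ₗ[K] (Fin (k+1) → K) :=
  LinearEquiv.ofBijective (Lmap k) ⟨Lmap_injective k, Lmap_surjective k⟩

instance (k : ℕ) : FiniteDimensional K (homogeneousSubmodule (Fin 2) K k) :=
  Module.Finite.equiv (Emap k).symm

lemma finrank_hs (k : ℕ) : Module.finrank K (homogeneousSubmodule (Fin 2) K k) = k + 1 := by
  rw [(Emap (K := K) k).finrank_eq, Module.finrank_fin_fun]

lemma eq_zero_of_dvd_of_lt {g a : MvPolynomial (Fin 2) K} {n k : ℕ}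
    (hg : g.IsHomogeneous n) (ha : a.IsHomogeneous k) (hk : k < n) (h : g ∣ a) : a = 0 := by
  obtain ⟨c, rfl⟩ := h
  have h1 : homogeneousComponent k (g * c) = g * c := by
    rw [homogeneousComponent_of_mem ((mem_homogeneousSubmodule _ _).2 ha), if_pos rfl]
  have h2 : g * c = ∑ i ∈ Finset.range (c.totalDegree + 1), g * homogeneousComponent i c := by
    rw [← Finset.mul_sum, sum_homogeneousComponent]
  conv_lhs => rw [← h1, h2]
  rw [map_sum]
  apply Finset.sum_eq_zero
  intro i _
  rw [homogeneousComponent_of_mem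
    ((mem_homogeneousSubmodule _ _).2 (hg.mul (homogeneousComponent_isHomogeneous i c))),
    if_neg (by omega)]

lemma key (m n : ℕ) (f g : MvPolynomial (Fin 2) K)
    (hg0 : g ≠ 0)
    (hf : f.IsHomogeneous (m+1)) (hg : g.IsHomogeneous (n+1))
    (hcop : IsRelPrime f g) :
    ∀ p : MvPolynomial (Fin 2) K, p.IsHomogeneous (m+n+1) → p ∈ Ideal.span {f, g} := by
  have hmem : ∀ ab : (homogeneousSubmodule (Fin 2) K n) × (homogeneousSubmodule (Fin 2) K m),
      (ab.1 : MvPolynomial (Fin 2) K) * f + (ab.2 : MvPolynomial (Fin 2) K) * g ∈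
        homogeneousSubmodule (Fin 2) K (m+n+1) := by
    intro ab
    apply Submodule.add_mem
    · exact (mem_homogeneousSubmodule _ _).2
        ((show n + (m+1) = m+n+1 by omega) ▸ (ab.1.2.mul hf))
    · exact (mem_homogeneousSubmodule _ _).2
        ((show m + (n+1) = m+n+1 by omega) ▸ (ab.2.2.mul hg))
  let Φ : ((homogeneousSubmodule (Fin 2) K n) × (homogeneousSubmodule (Fin 2) K m)) →ₗ[K]
      (homogeneousSubmodule (Fin 2) K (m+n+1)) :=
    { toFun := fun ab => ⟨(ab.1 : MvPolynomial (Fin 2) K) * f + (ab.2 : _) * g, hmem ab⟩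
      map_add' := fun ab cd => by
        apply Subtype.ext
        simp only [Prod.fst_add, Prod.snd_add, Submodule.coe_add]
        ring
      map_smul' := fun r ab => by
        apply Subtype.ext
        simp only [Prod.smul_fst, Prod.smul_snd, SetLike.val_smul, RingHom.id_apply,
          MvPolynomial.smul_eq_C_mul]
        ring }
  have hinj : Function.Injective Φ := by
    rw [← LinearMap.ker_eq_bot, LinearMap.ker_eq_bot']
    rintro ⟨a, b⟩ hab
    have h0 : (a : MvPolynomial (Fin 2) K) * f + (b : MvPolynomial (Fin 2) K) * g = 0 :=
      congrArg Subtype.val hab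
    have hdvd : g ∣ (f : MvPolynomial (Fin 2) K) * a := ⟨-b, by linear_combination h0⟩
    have hga : g ∣ (a : MvPolynomial (Fin 2) K) := hcop.symm.dvd_of_dvd_mul_left hdvd
    have ha0 : (a : MvPolynomial (Fin 2) K) = 0 :=
      eq_zero_of_dvd_of_lt hg a.2 (by omega) hga
    have hb0 : (b : MvPolynomial (Fin 2) K) = 0 := by
      have : (b : MvPolynomial (Fin 2) K) * g = 0 := by
        rw [ha0] at h0; simpa using h0
      rcases mul_eq_zero.1 this with h | h
      · exact h
      · exact absurd h hg0
    refine Prod.ext ?_ ?_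
    · exact Subtype.ext ha0
    · exact Subtype.ext hb0
  have hrank : Module.finrank K
      ((homogeneousSubmodule (Fin 2) K n) × (homogeneousSubmodule (Fin 2) K m)) =
      Module.finrank K (homogeneousSubmodule (Fin 2) K (m+n+1)) := by
    rw [Module.finrank_prod, finrank_hs, finrank_hs, finrank_hs]
    omega
  have hsurj : Function.Surjective Φ :=
    (LinearMap.injective_iff_surjective_of_finrank_eq_finrank hrank).1 hinj
  intro p hp
  obtain ⟨⟨a, b⟩, hab⟩ := hsurj ⟨p, (mem_homogeneousSubmodule _ _).2 hp⟩
  have : (a : MvPolynomial (Fin 2) K) * f + (b : MvPolynomial (Fin 2) K) * g = p :=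
    congrArg Subtype.val hab
  exact Ideal.mem_span_pair.2 ⟨a, b, this⟩

lemma pow_span_le (k : ℕ) :
    (Ideal.span {(X 0 : MvPolynomial (Fin 2) K), X 1}) ^ k ≤
      Ideal.span {p : MvPolynomial (Fin 2) K | p.IsHomogeneous k} := by
  induction k with
  | zero =>
    intro p _
    have h1 : (1 : MvPolynomial (Fin 2) K) ∈
        Ideal.span {p : MvPolynomial (Fin 2) K | p.IsHomogeneous 0} :=
      Ideal.subset_span (isHomogeneous_one (Fin 2) K)
    simpa using Ideal.mul_mem_left _ p h1
  | succ k ih =>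
    rw [pow_succ]
    refine le_trans (Ideal.mul_mono ih le_rfl) ?_
    rw [Ideal.span_mul_span']
    refine Ideal.span_le.2 ?_
    rintro q ⟨p, hp, r, hr, rfl⟩
    apply Ideal.subset_span
    rcases hr with hr | hr
    · exact hr ▸ hp.mul (isHomogeneous_X K 0)
    · rw [Set.mem_singleton_iff] at hr
      exact hr ▸ hp.mul (isHomogeneous_X K 1)

lemma isUnit_of_homog0 {f : MvPolynomial (Fin 2) K} (hf : f.IsHomogeneous 0) (hf0 : f ≠ 0) :
    IsUnit f := by
  have hC : f = C (coeff 0 f) := by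
    ext d
    by_cases hd : d = 0
    · subst hd; simp
    · rw [coeff_C, if_neg (Ne.symm hd)]
      by_contra hc
      exact hd (Finsupp.degree_eq_zero_iff d |>.1
        (by rw [Finsupp.degree_eq_weight_one]; exact hf hc))
  have hc : coeff 0 f ≠ 0 := fun h => hf0 (by rw [hC, h, map_zero])
  rw [hC]
  exact (isUnit_iff_ne_zero.mpr hc).map C

end SylvesterAux

open SylvesterAux in
/-- **Sylvester containment lemma.** If `f, g ∈ K[x,y]` are nonzero homogeneous
polynomials of degrees `m` and `n` with no non-unit common divisor, then
`(x,y)^{m+n-1} ⊆ (f,g)`. Here `X 0 = x` and `X 1 = y`. -/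
theorem sylvester_containment
    (K : Type*) [Field K] (m n : ℕ)
    (f g : MvPolynomial (Fin 2) K)
    (hf0 : f ≠ 0) (hg0 : g ≠ 0)
    (hf : f.IsHomogeneous m) (hg : g.IsHomogeneous n)
    (hcop : ∀ d : MvPolynomial (Fin 2) K, d ∣ f → d ∣ g → IsUnit d) :
    (Ideal.span {(X 0 : MvPolynomial (Fin 2) K), X 1}) ^ (m + n - 1) ≤ Ideal.span {f, g} := by
  match m, hf with
  | 0, hf =>
    have : Ideal.span {f, g} = ⊤ :=
      Ideal.eq_top_of_isUnit_mem _ (Ideal.subset_span (Set.mem_insert _ _))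
        (isUnit_of_homog0 hf hf0)
    rw [this]; exact le_top
  | (m+1), hf =>
    match n, hg with
    | 0, hg =>
      have : Ideal.span {f, g} = ⊤ :=
        Ideal.eq_top_of_isUnit_mem _
          (Ideal.subset_span (Set.mem_insert_of_mem _ (Set.mem_singleton _)))
          (isUnit_of_homog0 hg hg0)
      rw [this]; exact le_top
    | (n+1), hg =>
      have hk : (m+1) + (n+1) - 1 = m+n+1 := by omega
      rw [hk]
      refine le_trans (pow_span_le (m+n+1)) (Ideal.span_le.2 ?_)
      intro p hp
      exact key m n f g hg0 hf hg (fun z hz1 hz2 => hcop z hz1 hz2) p hp
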